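/- For every n with 1 ≤ n ≤ N−1 and every x ≥ 0, the value function satisfies the upper bound V_n(x) ≤ c_n · ∫_{[0,∞)^{N−n}} max(x, y_1, y_2, …, y_{N−n}) dμ^{⊗(N−n)}(y_1,…,y_{N−n}), i.e. V_n(x) is at most c_n times the expected value of the maximum of x and N−n further i.i.d. draws from μ. -/

import Mathlib

open MeasureTheory Set

noncomputable def MM (μ : Measure ℝ) : ℕ → ℝ → ℝ
  | 0, x => x
  | (k+1), x => ∫ y, MM μ k (max x y) ∂μ

lemma MM_zero (μ : Measure ℝ) (x : ℝ) : MM μ 0 x = x := rfl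
lemma MM_succ (μ : Measure ℝ) (k : ℕ) (x : ℝ) : MM μ (k+1) x = ∫ y, MM μ k (max x y) ∂μ := rfl

lemma supcons (m : ℕ) (x a : ℝ) (z : Fin m → ℝ) (hx : 0 ≤ x) (ha : 0 ≤ a)
    (hz : ∀ i, 0 ≤ z i) :
    max x (⨆ i, (Fin.cons a z : Fin (m+1) → ℝ) i) = max (max x a) (⨆ i, z i) := by
  cases m with
  | zero =>
      have h0 : (⨆ i, (Fin.cons a z : Fin (0+1) → ℝ) i) = a := by
        apply le_antisymm
        · exact ciSup_le fun i => by
            have : i = 0 := Fin.fin_one_eq_zero i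
            simp [this]
        · have := le_ciSup (Set.Finite.bddAbove (Set.finite_range (Fin.cons a z))) (0 : Fin 1)
          simpa using this
      rw [h0, Real.iSup_of_isEmpty]
      simp [max_eq_left (le_trans hx (le_max_left x a))]
  | succ m =>
      have h1 : (⨆ i, (Fin.cons a z : Fin (m+2) → ℝ) i) = max a (⨆ i, z i) := by
        apply le_antisymm
        · refine ciSup_le fun i => ?_
          induction i using Fin.cases with
          | zero => simp
          | succ j =>
              simp only [Fin.cons_succ]
              exact le_trans (le_ciSup (Set.Finite.bddAbove (Set.finite_range z)) j)
                (le_max_right _ _)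
        · refine max_le ?_ (ciSup_le fun j => ?_)
          · have := le_ciSup (Set.Finite.bddAbove (Set.finite_range (Fin.cons a z))) (0 : Fin (m+2))
            simpa using this
          · have := le_ciSup (Set.Finite.bddAbove (Set.finite_range (Fin.cons a z))) j.succ
            simpa using this
      rw [h1, max_assoc]

lemma supmeas (m : ℕ) (x : ℝ) :
    Measurable (fun y : Fin m → ℝ => max x (⨆ i, y i)) := by
  cases m with
  | zero => simp only [Real.iSup_of_isEmpty]; exact measurable_const
  | succ m =>
      have : ∀ y : Fin (m+1) → ℝ, (⨆ i, y i) = Finset.univ.sup' Finset.univ_nonempty (fun i => y i) :=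
        fun y => (Finset.sup'_univ_eq_ciSup _).symm
      simp_rw [this]
      refine measurable_const.max ?_
      have := Finset.measurable_sup' (f := fun (i : Fin (m+1)) (y : Fin (m+1) → ℝ) => y i)
        (Finset.univ_nonempty) (fun i _ => measurable_pi_apply i)
      convert this using 1
      ext y
      rw [Finset.sup'_apply]

section
variable {μ : Measure ℝ} [IsProbabilityMeasure μ]

lemma MM_int_aux (hmean : Integrable id μ) {k : ℕ}
    (hlip : ∀ a b : ℝ, 0 ≤ a → 0 ≤ b → |MM μ k a - MM μ k b| ≤ |a - b|)
    (hbd : ∀ x : ℝ, 0 ≤ x → x ≤ MM μ k x ∧ MM μ k x ≤ x + k * ∫ y, |y| ∂μ)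
    (x : ℝ) (hx : 0 ≤ x) : Integrable (fun y => MM μ k (max x y)) μ := by
  set E := ∫ y, |y| ∂μ with hE
  have hE0 : 0 ≤ E := integral_nonneg fun y => abs_nonneg y
  have habs : Integrable (fun y : ℝ => |y|) μ := by simpa using hmean.abs
  have hcont : Continuous (fun y => MM μ k (max x y)) := by
    refine LipschitzWith.continuous (K := 1) (LipschitzWith.of_dist_le_mul fun y z => ?_)
    rw [Real.dist_eq, Real.dist_eq]
    push_cast
    rw [one_mul]
    refine le_trans (hlip _ _ (le_trans hx (le_max_left _ _)) (le_trans hx (le_max_left _ _))) ?_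
    rw [max_comm x y, max_comm x z]
    exact abs_max_sub_max_le_abs y z x
  have hg : Integrable (fun y : ℝ => x + |y| + (k : ℝ) * E) μ := by
    exact (((integrable_const x).add habs).add (integrable_const _))
  refine hg.mono hcont.aestronglyMeasurable (Filter.Eventually.of_forall fun y => ?_)
  have hxy : (0:ℝ) ≤ max x y := le_trans hx (le_max_left x y)
  have h1 : (0:ℝ) ≤ MM μ k (max x y) := le_trans hxy (hbd _ hxy).1
  have h2 : MM μ k (max x y) ≤ x + |y| + (k:ℝ) * E := by
    refine le_trans (hbd _ hxy).2 ?_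
    have : max x y ≤ x + |y| :=
      max_le (by linarith [abs_nonneg y]) (le_trans (le_abs_self y) (by linarith))
    linarith
  rw [Real.norm_eq_abs, Real.norm_eq_abs, abs_of_nonneg h1,
    abs_of_nonneg (by positivity : (0:ℝ) ≤ x + |y| + (k:ℝ) * E)]
  exact h2

lemma MM_prop (hmean : Integrable id μ) : ∀ k : ℕ,
    (∀ a b : ℝ, 0 ≤ a → 0 ≤ b → |MM μ k a - MM μ k b| ≤ |a - b|) ∧
    (∀ x : ℝ, 0 ≤ x → x ≤ MM μ k x ∧ MM μ k x ≤ x + k * ∫ y, |y| ∂μ) := by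
  intro k
  set E := ∫ y, |y| ∂μ with hE
  have hE0 : 0 ≤ E := integral_nonneg fun y => abs_nonneg y
  have habs : Integrable (fun y : ℝ => |y|) μ := by simpa using hmean.abs
  induction k with
  | zero =>
      refine ⟨fun a b _ _ => le_rfl, fun x hx => ⟨?_, ?_⟩⟩
      · rw [MM_zero]
      · rw [MM_zero]; simp
  | succ k ih =>
      obtain ⟨ihlip, ihbd⟩ := ih
      have hint : ∀ x : ℝ, 0 ≤ x → Integrable (fun y => MM μ k (max x y)) μ :=
        MM_int_aux hmean ihlip ihbd
      constructor
      · intro a b ha hb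
        rw [MM_succ, MM_succ, ← integral_sub (hint a ha) (hint b hb), ← Real.norm_eq_abs]
        refine le_trans (norm_integral_le_integral_norm _) ?_
        have h3 : ∫ y, ‖MM μ k (max a y) - MM μ k (max b y)‖ ∂μ ≤ ∫ _, |a - b| ∂μ := by
          refine integral_mono ((hint a ha).sub (hint b hb)).norm (integrable_const _)
            fun y => ?_
          rw [Real.norm_eq_abs]
          refine le_trans (ihlip _ _ (le_trans ha (le_max_left _ _))
            (le_trans hb (le_max_left _ _))) ?_
          exact abs_max_sub_max_le_abs a b y
        simpa using h3
      · intro x hx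
        constructor
        · rw [MM_succ]
          have h4 : ∫ (_ : ℝ), x ∂μ ≤ ∫ y, MM μ k (max x y) ∂μ := by
            refine integral_mono (integrable_const _) (hint x hx) fun y => ?_
            exact le_trans (le_max_left x y) (ihbd _ (le_trans hx (le_max_left x y))).1
          simpa using h4
        · rw [MM_succ]
          have h1 : ∫ y, MM μ k (max x y) ∂μ ≤ ∫ y, (x + |y| + (k:ℝ) * E) ∂μ := by
            refine integral_mono (hint x hx)
              (((integrable_const x).add habs).add (integrable_const _)) fun y => ?_
            refine le_trans (ihbd _ (le_trans hx (le_max_left x y))).2 ?_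
            have : max x y ≤ x + |y| :=
              max_le (by linarith [abs_nonneg y]) (le_trans (le_abs_self y) (by linarith [abs_nonneg y]))
            linarith
          have hax : Integrable (fun y : ℝ => x + |y|) μ := (integrable_const x).add habs
          have h2 : ∫ y, (x + |y| + (k:ℝ) * E) ∂μ = x + E + (k:ℝ) * E := by
            rw [integral_add hax (integrable_const _), integral_add (integrable_const x) habs,
              integral_const, integral_const]
            simp [hE]
          rw [h2] at h1
          refine le_trans h1 ?_
          push_cast
          linarith

lemma pi_ae_nonneg (hsupp : μ {x : ℝ | x < 0} = 0) (m : ℕ) :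
    ∀ᵐ z : Fin m → ℝ ∂(Measure.pi fun _ : Fin m => μ), ∀ i, 0 ≤ z i := by
  rw [MeasureTheory.ae_all_iff]
  intro i
  rw [ae_iff]
  have hset : {z : Fin m → ℝ | ¬ 0 ≤ z i} = Function.eval i ⁻¹' {t : ℝ | t < 0} := by
    ext z; simp [not_le]
  rw [hset]
  exact Measure.pi_eval_preimage_null _ hsupp

lemma mu_ae_nonneg (hsupp : μ {x : ℝ | x < 0} = 0) : ∀ᵐ y ∂μ, 0 ≤ y := by
  rw [ae_iff]
  simpa [not_le] using hsupp

lemma MM_eq_pi (hmean : Integrable id μ) (hsupp : μ {x : ℝ | x < 0} = 0) : ∀ k : ℕ, ∀ x : ℝ, 0 ≤ x →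
    (MM μ k x = ∫ y : Fin k → ℝ, max x (⨆ i, y i) ∂(Measure.pi fun _ : Fin k => μ)) ∧
    Integrable (fun y : Fin k → ℝ => max x (⨆ i, y i)) (Measure.pi fun _ : Fin k => μ) := by
  intro k
  induction k with
  | zero =>
      intro x hx
      have hfun : (fun y : Fin 0 → ℝ => max x (⨆ i, y i)) = fun _ => x := by
        funext y
        rw [Real.iSup_of_isEmpty, max_eq_left hx]
      constructor
      · rw [MM_zero, hfun]
        simp
      · rw [hfun]
        exact integrable_const _
  | succ k ih =>
      intro x hx
      have hmp := (measurePreserving_piFinSuccAbove (fun _ : Fin (k+1) => μ) 0).symm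
      set ν := (Measure.pi fun _ : Fin k => μ) with hν
      set e := MeasurableEquiv.piFinSuccAbove (fun _ : Fin (k+1) => ℝ) 0 with he
      have hesymm : ∀ p : ℝ × (Fin k → ℝ), e.symm p = Fin.cons p.1 p.2 := by
        intro p
        simp [he, MeasurableEquiv.piFinSuccAbove_symm_apply, Fin.insertNthEquiv,
          Fin.insertNth_zero]
      set G : ℝ × (Fin k → ℝ) → ℝ := fun p => max x (⨆ i, (Fin.cons p.1 p.2 : Fin (k+1) → ℝ) i) with hG
      have hcons : Measurable (fun p : ℝ × (Fin k → ℝ) => (Fin.cons p.1 p.2 : Fin (k+1) → ℝ)) := by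
        rw [measurable_pi_iff]
        intro i
        induction i using Fin.cases with
        | zero => simpa using measurable_fst
        | succ j =>
            simp only [Fin.cons_succ]
            exact (measurable_pi_apply j).comp measurable_snd
      have hGmeas : Measurable G := (supmeas (k+1) x).comp hcons
      have hGnn : ∀ p, 0 ≤ G p := fun p => le_trans hx (le_max_left _ _)
      have hGint : Integrable G (μ.prod ν) := by
        rw [integrable_prod_iff hGmeas.aestronglyMeasurable]
        constructor
        · filter_upwards [mu_ae_nonneg hsupp] with y hy
          refine (ih (max x y) (le_trans hx (le_max_left _ _))).2.congr ?_
          filter_upwards [pi_ae_nonneg hsupp k] with z hz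
          exact (supcons k x y z hx hy hz).symm
        · have hkey : (fun y => ∫ z, ‖G (y, z)‖ ∂ν) =ᵐ[μ] (fun y => MM μ k (max x y)) := by
            filter_upwards [mu_ae_nonneg hsupp] with y hy
            have h1 : (fun z => ‖G (y, z)‖) = fun z => G (y, z) := by
              funext z
              rw [Real.norm_eq_abs, abs_of_nonneg (hGnn _)]
            rw [h1]
            have h2 : ∫ z, G (y, z) ∂ν = ∫ z, max (max x y) (⨆ i, z i) ∂ν := by
              refine integral_congr_ae ?_
              filter_upwards [pi_ae_nonneg hsupp k] with z hz
              exact supcons k x y z hx hy hz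
            rw [h2, ← (ih (max x y) (le_trans hx (le_max_left _ _))).1]
          refine (MM_int_aux hmean (MM_prop hmean k).1 (MM_prop hmean k).2 x hx).congr ?_
          exact hkey.symm
      have hIntPi : Integrable (fun y : Fin (k+1) → ℝ => max x (⨆ i, y i))
          (Measure.pi fun _ : Fin (k+1) => μ) := by
        have hcomp : (fun y : Fin (k+1) → ℝ => max x (⨆ i, y i)) ∘ e.symm = G := by
          funext p
          simp only [Function.comp_apply, hesymm p, hG]
        exact (hmp.integrable_comp_emb (MeasurableEquiv.measurableEmbedding _)).1
          (hcomp.symm ▸ hGint)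
      refine ⟨?_, hIntPi⟩
      rw [MM_succ]
      have step1 : ∫ y, MM μ k (max x y) ∂μ = ∫ y, ∫ z, G (y, z) ∂ν ∂μ := by
        refine integral_congr_ae ?_
        filter_upwards [mu_ae_nonneg hsupp] with y hy
        rw [(ih (max x y) (le_trans hx (le_max_left _ _))).1]
        refine integral_congr_ae ?_
        filter_upwards [pi_ae_nonneg hsupp k] with z hz
        exact (supcons k x y z hx hy hz).symm
      rw [step1]
      have step2 : ∫ y, ∫ z, G (y, z) ∂ν ∂μ = ∫ p, G p ∂(μ.prod ν) :=
        integral_integral hGint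
      rw [step2]
      have step3 : ∫ p, G p ∂(μ.prod ν)
          = ∫ w : Fin (k+1) → ℝ, max x (⨆ i, w i) ∂(Measure.pi fun _ : Fin (k+1) => μ) := by
        rw [← hmp.integral_comp (MeasurableEquiv.measurableEmbedding _)]
        refine integral_congr_ae (Filter.Eventually.of_forall fun p => ?_)
        simp only [hesymm p, hG]
      exact step3

end

/-- For `1 ≤ n ≤ N-1` and `x ≥ 0`, the value function satisfies
`V n x ≤ c n * E[max(x, y₁, …, y_{N-n})]` where `y₁,…,y_{N-n}` are i.i.d. draws from `μ`. -/
theorem value_function_upper_bound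
    (N : ℕ) (hN : 2 ≤ N) (τ : ℝ) (hτ : 0 < τ)
    (μ : Measure ℝ) [IsProbabilityMeasure μ]
    (hsupp : μ {x : ℝ | x < 0} = 0) (hmean : Integrable id μ)
    (c : ℕ → ℝ) (hc : ∀ n : ℕ, c n = 1 / (1 + (n : ℝ) * τ))
    (V : ℕ → ℝ → ℝ)
    (hVN : ∀ x : ℝ, 0 ≤ x → V N x = c N * x)
    (hVn : ∀ n : ℕ, 1 ≤ n → n ≤ N - 1 → ∀ x : ℝ, 0 ≤ x →
      V n x = max (c n * x) (∫ y, V (n + 1) (max x y) ∂μ)) :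
    ∀ n : ℕ, 1 ≤ n → n ≤ N - 1 → ∀ x : ℝ, 0 ≤ x →
      V n x ≤ c n *
        ∫ y : Fin (N - n) → ℝ, max x (⨆ i : Fin (N - n), y i)
          ∂(Measure.pi fun _ : Fin (N - n) => μ) := by
  have hcpos : ∀ n : ℕ, 0 < c n := by
    intro n
    rw [hc]
    positivity
  have hcmono : ∀ n : ℕ, c (n + 1) ≤ c n := by
    intro n
    rw [hc, hc]
    apply one_div_le_one_div_of_le
    · positivity
    · push_cast
      nlinarith [hτ.le]
  have hVpos : ∀ m : ℕ, 1 ≤ m → m ≤ N → ∀ z : ℝ, 0 ≤ z → c m * z ≤ V m z := by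
    intro m hm1 hmN z hz
    rcases eq_or_lt_of_le hmN with h | h
    · rw [h, hVN z hz]
    · rw [hVn m hm1 (by omega) z hz]
      exact le_max_left _ _
  have key : ∀ k : ℕ, ∀ n : ℕ, 1 ≤ n → n + k = N → 1 ≤ k → ∀ x : ℝ, 0 ≤ x →
      V n x ≤ c n * MM μ k x := by
    intro k
    induction k with
    | zero => omega
    | succ k ih =>
        intro n hn hnk _ x hx
        have hstep : ∀ z : ℝ, 0 ≤ z → V (n + 1) z ≤ c (n + 1) * MM μ k z := by
          cases k with
          | zero =>
              intro z hz
              have hn1 : n + 1 = N := by omega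
              rw [hn1, hVN z hz, MM_zero]
          | succ k' =>
              intro z hz
              exact ih (n + 1) (by omega) (by omega) (by omega) z hz
        have hMint : Integrable (fun y => MM μ k (max x y)) μ :=
          MM_int_aux hmean (MM_prop hmean k).1 (MM_prop hmean k).2 x hx
        have h1 : ∫ y, V (n + 1) (max x y) ∂μ ≤ c (n + 1) * MM μ (k + 1) x := by
          have hmono : ∫ y, V (n + 1) (max x y) ∂μ
              ≤ ∫ y, c (n + 1) * MM μ k (max x y) ∂μ := by
            refine integral_mono_of_nonneg ?_ (hMint.const_mul _) ?_
            · refine Filter.Eventually.of_forall fun y => ?_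
              have hxy : (0:ℝ) ≤ max x y := le_trans hx (le_max_left x y)
              exact le_trans (mul_nonneg (hcpos _).le hxy) (hVpos (n+1) (by omega) (by omega) _ hxy)
            · exact Filter.Eventually.of_forall fun y =>
                hstep _ (le_trans hx (le_max_left x y))
          rw [integral_const_mul] at hmono
          rw [MM_succ]
          exact hmono
        have hMlb : x ≤ MM μ (k + 1) x := ((MM_prop hmean (k+1)).2 x hx).1
        have hM0 : 0 ≤ MM μ (k + 1) x := le_trans hx hMlb
        rw [hVn n hn (by omega) x hx]
        refine max_le ?_ (le_trans h1 ?_)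
        · exact mul_le_mul_of_nonneg_left hMlb (hcpos n).le
        · exact mul_le_mul_of_nonneg_right (hcmono n) hM0
  intro n hn hnN x hx
  have hk : n + (N - n) = N := by omega
  have h := key (N - n) n hn hk (by omega) x hx
  rwa [(MM_eq_pi hmean hsupp (N - n) x hx).1] at h
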